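/- (Euler method global error bound) Let f : ℝ^n × ℝ → ℝ^n be L-Lipschitz in the state variable, uniformly in time, and let x : [t₀, t₁] → ℝ^n solve ẋ = f(x, t) with ‖ẍ(t)‖ ≤ M on [t₀, t₁]. Let xₙ be the Euler iterates with step size h starting from x(t₀). Then ‖x(tₙ) − xₙ‖ ≤ (hM/(2L)) (e^{L(tₙ − t₀)} − 1). -/

import Mathlib

open Set

/-- Taylor remainder bound for the Euler step. -/
lemma euler_taylor_step {E : Type*} [NormedAddCommGroup E] [NormedSpace ℝ E]
    (x g x'' : ℝ → E) (a b M : ℝ) (hab : a ≤ b) (hM : 0 ≤ M)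
    (hx : ∀ t ∈ Icc a b, HasDerivAt x (g t) t)
    (hg : ∀ t ∈ Icc a b, HasDerivAt g (x'' t) t)
    (hbd : ∀ t ∈ Icc a b, ‖x'' t‖ ≤ M) :
    ‖x b - x a - (b - a) • g a‖ ≤ M * (b - a) ^ 2 / 2 := by
  set F : ℝ → E := fun s => x s - x a - (s - a) • g a with hF
  have hFc : ContinuousOn F (Icc a b) := by
    apply ContinuousOn.sub
    · apply ContinuousOn.sub
      · exact fun t ht => (hx t ht).continuousAt.continuousWithinAt
      · exact continuousOn_const
    · exact (Continuous.smul (by continuity) continuous_const).continuousOn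
  have hF' : ∀ s ∈ Ico a b, HasDerivWithinAt F (g s - g a) (Ici s) s := by
    intro s hs
    have h1 : HasDerivAt (fun s : ℝ => (s - a) • g a) (g a) s := by
      have := ((hasDerivAt_id s).sub_const a).smul_const (g a)
      simpa using this
    have := ((hx s ⟨hs.1, hs.2.le⟩).sub_const (x a)).sub h1
    exact this.hasDerivWithinAt
  have hB : ∀ s : ℝ, HasDerivAt (fun s => M * (s - a) ^ 2 / 2) (M * (s - a)) s := by
    intro s
    have h1 : HasDerivAt (fun s : ℝ => (s - a) ^ 2) (2 * (s - a)) s := by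
      simpa [Pi.pow_def] using (((hasDerivAt_id s).sub_const a).pow 2)
    have := (h1.const_mul M).div_const 2
    exact this.congr_deriv (by ring)
  have hbound : ∀ s ∈ Ico a b, ‖g s - g a‖ ≤ M * (s - a) := by
    intro s hs
    have := Convex.norm_image_sub_le_of_norm_hasDerivWithin_le
      (fun t ht => (hg t ht).hasDerivWithinAt) hbd (convex_Icc a b)
      (left_mem_Icc.2 hab) ⟨hs.1, hs.2.le⟩
    calc ‖g s - g a‖ ≤ M * ‖s - a‖ := this
      _ = M * (s - a) := by rw [Real.norm_eq_abs, abs_of_nonneg (by linarith [hs.1])]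
  have key := image_norm_le_of_norm_deriv_right_le_deriv_boundary hFc hF'
    (B := fun s => M * (s - a) ^ 2 / 2) (B' := fun s => M * (s - a))
    (by simp [hF]) hB hbound (right_mem_Icc.2 hab)
  simpa [hF] using key

/-- Global error bound for Euler's method. -/
theorem euler_method_global_error
    (n : ℕ) (f : EuclideanSpace ℝ (Fin n) → ℝ → EuclideanSpace ℝ (Fin n))
    (L M t₀ t₁ hstep : ℝ) (hL : 0 < L) (hM : 0 ≤ M) (hh : 0 < hstep)
    (hLip : ∀ t : ℝ, ∀ x y : EuclideanSpace ℝ (Fin n),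
      ‖f x t - f y t‖ ≤ L * ‖x - y‖)
    (x : ℝ → EuclideanSpace ℝ (Fin n))
    (hode : ∀ t ∈ Icc t₀ t₁, HasDerivAt x (f (x t) t) t)
    (x'' : ℝ → EuclideanSpace ℝ (Fin n))
    (hx'' : ∀ t ∈ Icc t₀ t₁, HasDerivAt (fun s => f (x s) s) (x'' t) t)
    (hM' : ∀ t ∈ Icc t₀ t₁, ‖x'' t‖ ≤ M)
    (xe : ℕ → EuclideanSpace ℝ (Fin n))
    (hxe0 : xe 0 = x t₀)
    (hxe : ∀ k : ℕ, xe (k + 1) = xe k + hstep • f (xe k) (t₀ + k * hstep)) :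
    ∀ k : ℕ, t₀ + k * hstep ≤ t₁ →
      ‖x (t₀ + k * hstep) - xe k‖ ≤
        hstep * M / (2 * L) * (Real.exp (L * (t₀ + k * hstep - t₀)) - 1) := by
  set A : ℝ := 1 + L * hstep with hA
  set C : ℝ := hstep * M / (2 * L) with hC
  have hC0 : 0 ≤ C := by positivity
  have hA0 : (0:ℝ) ≤ A := by nlinarith
  -- main induction
  have main : ∀ k : ℕ, t₀ + k * hstep ≤ t₁ →
      ‖x (t₀ + k * hstep) - xe k‖ ≤ C * (A ^ k - 1) := by
    intro k
    induction k with
    | zero => intro _; simp [hxe0]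
    | succ k ih =>
      intro hk1
      have hkk : (k : ℝ) * hstep < (k + 1 : ℕ) * hstep := by
        push_cast; nlinarith
      have hk : t₀ + k * hstep ≤ t₁ := by linarith
      have ihk := ih hk
      set a := t₀ + k * hstep with ha
      have hb : t₀ + ((k : ℝ) + 1) * hstep = a + hstep := by ring
      have hab : a ≤ a + hstep := by linarith
      have ht0a : t₀ ≤ a := by
        have : (0:ℝ) ≤ (k:ℝ) * hstep := by positivity
        linarith
      have hsub : Icc a (a + hstep) ⊆ Icc t₀ t₁ := by
        apply Icc_subset_Icc ht0a
        have := hk1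
        push_cast at this
        linarith
      -- Taylor bound
      have taylor := euler_taylor_step x (fun s => f (x s) s) x'' a (a + hstep) M hab hM
        (fun t ht => hode t (hsub ht)) (fun t ht => hx'' t (hsub ht))
        (fun t ht => hM' t (hsub ht))
      have htay : ‖x (a + hstep) - x a - hstep • f (x a) a‖ ≤ M * hstep ^ 2 / 2 := by
        simpa using taylor
      -- Lipschitz bound on the step
      have hlip : ‖(x a + hstep • f (x a) a) - (xe k + hstep • f (xe k) a)‖
          ≤ A * ‖x a - xe k‖ := by
        have h1 : (x a + hstep • f (x a) a) - (xe k + hstep • f (xe k) a)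
            = (x a - xe k) + hstep • (f (x a) a - f (xe k) a) := by
          rw [smul_sub]; abel
        rw [h1]
        calc ‖(x a - xe k) + hstep • (f (x a) a - f (xe k) a)‖
            ≤ ‖x a - xe k‖ + ‖hstep • (f (x a) a - f (xe k) a)‖ := norm_add_le _ _
          _ = ‖x a - xe k‖ + hstep * ‖f (x a) a - f (xe k) a‖ := by
              rw [norm_smul, Real.norm_eq_abs, abs_of_pos hh]
          _ ≤ ‖x a - xe k‖ + hstep * (L * ‖x a - xe k‖) := by
              have := hLip a (x a) (xe k)
              nlinarith
          _ = A * ‖x a - xe k‖ := by ring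
      have hstep_eq : xe (k + 1) = xe k + hstep • f (xe k) a := by
        rw [hxe k]
      have hsplit : ‖x (a + hstep) - xe (k + 1)‖
          ≤ M * hstep ^ 2 / 2 + A * ‖x a - xe k‖ := by
        calc ‖x (a + hstep) - xe (k + 1)‖
            = ‖(x (a + hstep) - x a - hstep • f (x a) a)
                + ((x a + hstep • f (x a) a) - (xe k + hstep • f (xe k) a))‖ := by
              rw [hstep_eq]; congr 1; abel
          _ ≤ ‖x (a + hstep) - x a - hstep • f (x a) a‖
              + ‖(x a + hstep • f (x a) a) - (xe k + hstep • f (xe k) a)‖ := norm_add_le _ _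
          _ ≤ M * hstep ^ 2 / 2 + A * ‖x a - xe k‖ := add_le_add htay hlip
      have hkey : M * hstep ^ 2 / 2 + A * (C * (A ^ k - 1)) = C * (A ^ (k + 1) - 1) := by
        have hCL : C * L * hstep = M * hstep ^ 2 / 2 := by
          rw [hC]
          field_simp
        have : C * (A ^ (k+1) - 1) = A * (C * (A^k - 1)) + C * (A - 1) := by ring
        rw [this, hA]
        linarith [hCL]
      have final : ‖x (a + hstep) - xe (k + 1)‖ ≤ C * (A ^ (k + 1) - 1) := by
        calc ‖x (a + hstep) - xe (k + 1)‖
            ≤ M * hstep ^ 2 / 2 + A * ‖x a - xe k‖ := hsplit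
          _ ≤ M * hstep ^ 2 / 2 + A * (C * (A ^ k - 1)) :=
              add_le_add_right (mul_le_mul_of_nonneg_left ihk hA0) _
          _ = C * (A ^ (k + 1) - 1) := hkey
      push_cast
      rw [hb]
      exact final
  intro k hk
  have h1 := main k hk
  have h2 : A ^ k ≤ Real.exp (L * (t₀ + k * hstep - t₀)) := by
    have : A ≤ Real.exp (L * hstep) := by
      have := Real.add_one_le_exp (L * hstep)
      linarith
    calc A ^ k ≤ Real.exp (L * hstep) ^ k := pow_le_pow_left₀ hA0 this k
      _ = Real.exp (L * hstep * k) := by rw [← Real.exp_nat_mul]; ring_nf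
      _ = Real.exp (L * (t₀ + k * hstep - t₀)) := by ring_nf
  calc ‖x (t₀ + k * hstep) - xe k‖ ≤ C * (A ^ k - 1) := h1
    _ ≤ C * (Real.exp (L * (t₀ + k * hstep - t₀)) - 1) := by
        apply mul_le_mul_of_nonneg_left _ hC0
        linarith
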